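/- arXiv:1805.04746 — 2 statements merged into one kernel-verified Lean document; each statement's English description precedes it below -/
import Mathlib

section
/- Let k ≥ 1 and let A = ℤ[t₁^{±1},…,t_{2k}^{±1}] with the bar involution sending tᵢ ↦ tᵢ⁻¹. Set s := t₁⋯t_{2k} and Q := (1−t₁)⋯(1−t_{2k}). For W ∈ A define V := W − W̄ + W·W̄·Q·(1−s⁻¹) and V⁺ := W − W·W̄·Q·s⁻¹. Then the bar of V⁺ equals −(V − V⁺). -/
/-!
STATEMENT 2: Let k ≥ 1 and A = ℤ[t₁^{±1},…,t_{2k}^{±1}] with the bar involution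
tᵢ ↦ tᵢ⁻¹.  Set s := t₁⋯t_{2k} and Q := (1−t₁)⋯(1−t_{2k}).  For W ∈ A define
V := W − W̄ + W·W̄·Q·(1−s⁻¹) and V⁺ := W − W·W̄·Q·s⁻¹.  Then V̄⁺ = −(V − V⁺).

We model A as the group algebra `AddMonoidAlgebra ℤ (Fin (2*k) → ℤ)`:
a monomial t^w corresponds to `Finsupp.single w 1`.  The bar involution is the
ring (algebra) automorphism induced by negation on the exponent group; note that
s⁻¹ is the monomial t^{(-1,…,-1)}.
-/

/-- Laurent polynomials ℤ[t₁^{±1},…,t_n^{±1}]. -/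
abbrev Laurent (n : ℕ) := AddMonoidAlgebra ℤ (Fin n → ℤ)

/-- The bar involution tᵢ ↦ tᵢ⁻¹, i.e. the ring automorphism induced by
negation on exponents. -/
noncomputable def bar (n : ℕ) : Laurent n ≃ₐ[ℤ] Laurent n :=
  AddMonoidAlgebra.domCongr ℤ ℤ (AddEquiv.neg (Fin n → ℤ))

/-- The variable tᵢ. -/
noncomputable def tvar {n : ℕ} (i : Fin n) : Laurent n :=
  AddMonoidAlgebra.single (Pi.single i 1) 1

/-- The monomial s⁻¹ = (t₁⋯t_n)⁻¹ = t₁⁻¹⋯t_n⁻¹. -/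
noncomputable def sInv (n : ℕ) : Laurent n := AddMonoidAlgebra.single (fun _ => (-1 : ℤ)) 1

lemma bar_single {n : ℕ} (w : Fin n → ℤ) (c : ℤ) :
    bar n (AddMonoidAlgebra.single w c) = AddMonoidAlgebra.single (-w) c :=
  by rw [bar, AddMonoidAlgebra.domCongr_single]; rfl

/-- tᵢ⁻¹. -/
noncomputable def tInv {n : ℕ} (i : Fin n) : Laurent n :=
  AddMonoidAlgebra.single (-(Pi.single i 1)) 1

lemma tInv_mul_tvar {n : ℕ} (i : Fin n) : tInv i * tvar i = 1 := by
  rw [tInv, tvar, AddMonoidAlgebra.single_mul_single]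
  simp [AddMonoidAlgebra.one_def]

lemma bar_tvar {n : ℕ} (i : Fin n) : bar n (tvar i) = tInv i := by
  rw [tvar, tInv, bar_single]

lemma bar_one_sub_tvar {n : ℕ} (i : Fin n) :
    bar n (1 - tvar i) = -(tInv i) * (1 - tvar i) := by
  rw [map_sub, map_one, bar_tvar]
  linear_combination - tInv_mul_tvar i

lemma prod_neg_tInv (k : ℕ) : (∏ i : Fin (2*k), -(tInv i)) = sInv (2*k) := by
  have h : ∀ i : Fin (2*k), -(tInv i)
      = (AddMonoidAlgebra.single (-(Pi.single i (1:ℤ))) (-1:ℤ) : Laurent (2*k)) := by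
    intro i
    rw [tInv, ← AddMonoidAlgebra.single_neg]
  rw [Finset.prod_congr rfl fun i _ => h i, AddMonoidAlgebra.prod_single]
  have h2 : ∑ i : Fin (2*k), -(Pi.single i (1:ℤ)) = fun _ => (-1:ℤ) := by
    rw [Finset.sum_neg_distrib, Finset.univ_sum_single]
    funext j; simp
  rw [h2, Finset.prod_const, Finset.card_univ, Fintype.card_fin, pow_mul,
    neg_one_sq, one_pow, sInv]

lemma bar_prod (k : ℕ) :
    bar (2*k) (∏ i, (1 - tvar i)) = (∏ i, (1 - tvar i)) * sInv (2*k) := by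
  rw [map_prod, Finset.prod_congr rfl (fun i _ => bar_one_sub_tvar (n := 2*k) i),
    Finset.prod_mul_distrib, prod_neg_tInv]
  exact mul_comm _ _

lemma bar_sInv (n : ℕ) :
    bar n (sInv n) = (AddMonoidAlgebra.single (fun _ => (1 : ℤ)) 1 : Laurent n) := by
  rw [sInv, bar_single]
  congr 1

lemma sInv_mul_barsInv (n : ℕ) :
    sInv n * bar n (sInv n) = 1 := by
  rw [bar_sInv, sInv, AddMonoidAlgebra.single_mul_single]
  rw [show ((fun _ => (-1:ℤ)) + fun _ => (1:ℤ)) = (0 : Fin n → ℤ) from by funext j; simp]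
  simp [AddMonoidAlgebra.one_def]

lemma bar_bar {n : ℕ} (x : Laurent n) : bar n (bar n x) = x := by
  induction x using AddMonoidAlgebra.induction_linear with
  | zero => simp
  | add f g hf hg => rw [map_add, map_add, hf, hg]
  | single a b => rw [bar_single, bar_single, neg_neg]

theorem stmt_2 (k : ℕ) (hk : 1 ≤ k) (W V Vplus : Laurent (2*k))
    (hV : V = W - bar _ W + W * bar _ W *
      ((∏ i, (1 - tvar i)) * (1 - sInv (2*k))))
    (hVplus : Vplus = W - W * bar _ W * (∏ i, (1 - tvar i)) * sInv (2*k)) :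
    bar _ Vplus = -(V - Vplus) := by

  subst hV hVplus
  rw [map_sub, map_mul, map_mul, map_mul, bar_prod, bar_bar]
  linear_combination (-(W * bar (2*k) W * (∏ i : Fin (2*k), (1 - tvar i)))) *
    sInv_mul_barsInv (2*k)
end

section
/- Let n ≥ 1. In the formal power series ring ℚ[[q]], one has Σ_π ω^c_π · q^{|π|} = exp( M_{n−1}(q) − 1 ), where the sum is over all n-partitions π (including the empty one), M₀(q) := Σ_{i ≥ 0} qⁱ, and for n ≥ 2, M_{n−1}(q) := Σ_{i ≥ 0} P_{n−1}(i)·qⁱ with P_{n−1}(i) the number of (n−1)-partitions of size i. -/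
/-!
STATEMENT 15: Let n ≥ 1.  In ℚ[[q]]:
  Σ_π ω^c_π · q^{|π|} = exp( M_{n−1}(q) − 1 ),
the sum being over all n-partitions π, where M₀(q) = Σ_i qⁱ and, for n ≥ 2,
M_{n−1}(q) = Σ_i P_{n−1}(i)·qⁱ with P_{n−1}(i) the number of (n−1)-partitions of
size i.

Modelling: partitions are 0-indexed weakly decreasing finitely supported functions
ℕⁿ → ℕ (so 0-partitions are constants c, of size c, matching M₀(q) = Σ qⁱ);
exp(X), for X = M_{n−1}(q) − 1 with zero constant term, is the series whose b-th
coefficient is Σ_a (1/a!)·(b-th coefficient of X^a) (a finite sum, as X^a has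
order ≥ a).  The (finite) sums and products defining ω^c_π and the coefficients
are `finsum`/`finprod`.
-/

/-- An `n`-partition: a function π : ℕⁿ → ℕ (0-indexed version of (ℤ_{≥1})ⁿ → ℕ),
weakly decreasing in each coordinate and with finite support. -/
structure NPartition (n : ℕ) where
  toFun : (Fin n → ℕ) → ℕ
  antitone : ∀ ⦃i j : Fin n → ℕ⦄, (∀ a, i a ≤ j a) → toFun j ≤ toFun i
  finite : (Function.support toFun).Finite

/-- The size |π| = Σ_i π(i). -/
noncomputable def NPartition.size {n : ℕ} (π : NPartition n) : ℕ := ∑ᶠ i, π.toFun i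

open Function

theorem NPartition.ext' {k : ℕ} {π π' : NPartition k} (h : π.toFun = π'.toFun) : π = π' := by
  cases π; cases π'; simpa using h

theorem NPartition.size_eq {k : ℕ} (π : NPartition k) :
    π.size = ∑ i ∈ π.finite.toFinset, π.toFun i :=
  finsum_eq_sum _ π.finite

theorem NPartition.le_size {k : ℕ} (π : NPartition k) (j : Fin k → ℕ) : π.toFun j ≤ π.size := by
  rw [π.size_eq]
  by_cases hj : π.toFun j = 0
  · simp [hj]
  · exact Finset.single_le_sum (fun i _ => Nat.zero_le _) (by simpa using hj)

theorem NPartition.size_eq_zero_iff {k : ℕ} (π : NPartition k) :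
    π.size = 0 ↔ π.toFun = 0 := by
  constructor
  · intro h
    funext j
    have h2 := π.le_size j
    rw [h] at h2
    simpa using Nat.le_zero.mp h2
  · intro h
    rw [π.size_eq]
    simp [h]

theorem NPartition.coord_lt_size {k : ℕ} (π : NPartition k) {j : Fin k → ℕ}
    (hj : π.toFun j ≠ 0) (a : Fin k) : j a < π.size := by
  classical
  set T : Finset (Fin k → ℕ) := (Finset.range (j a + 1)).image (fun c => Function.update j a c)
    with hT
  have hsub : T ⊆ π.finite.toFinset := by
    intro x hx
    simp only [hT, Finset.mem_image, Finset.mem_range] at hx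
    obtain ⟨c, hc, rfl⟩ := hx
    have hle : ∀ b, Function.update j a c b ≤ j b := by
      intro b
      rcases eq_or_ne b a with rfl | hb
      · simp; omega
      · simp [Function.update_of_ne hb]
    have : π.toFun j ≤ π.toFun (Function.update j a c) := π.antitone hle
    simp only [Set.Finite.mem_toFinset, mem_support]
    omega
  have hcard : T.card = j a + 1 := by
    rw [hT, Finset.card_image_of_injective, Finset.card_range]
    intro c d hcd
    have := congrFun hcd a
    simpa using this
  have h1 : T.card ≤ ∑ i ∈ π.finite.toFinset, π.toFun i := by
    calc T.card = ∑ i ∈ T, 1 := by simp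
    _ ≤ ∑ i ∈ T, π.toFun i := by
        apply Finset.sum_le_sum
        intro i hi
        have := hsub hi
        simp only [Set.Finite.mem_toFinset, mem_support] at this
        omega
    _ ≤ ∑ i ∈ π.finite.toFinset, π.toFun i :=
        Finset.sum_le_sum_of_subset hsub
  rw [← π.size_eq] at h1
  omega

instance NPartition.finite_size_eq (k b : ℕ) : Finite {π : NPartition k // π.size = b} := by
  classical
  apply Finite.of_injective
    (f := fun π : {π : NPartition k // π.size = b} =>
      (fun j : Fin k → Fin b => (⟨π.1.toFun (fun a => (j a : ℕ)), by
        have := π.1.le_size (fun a => (j a : ℕ)); omega⟩ : Fin (b + 1))))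
  rintro ⟨π, hπ⟩ ⟨π', hπ'⟩ h
  ext1
  apply NPartition.ext'
  funext j
  by_cases hjb : ∀ a, j a < b
  · have := congrFun h (fun a => (⟨j a, hjb a⟩ : Fin b))
    simpa [Fin.ext_iff] using this
  · push_neg at hjb
    obtain ⟨a, ha⟩ := hjb
    have h1 : π.toFun j = 0 := by
      by_contra hne
      have := π.coord_lt_size hne a; omega
    have h2 : π'.toFun j = 0 := by
      by_contra hne
      have := π'.coord_lt_size hne a; omega
    rw [h1, h2]

/-- The binary representation of an (n−1)-partition ξ, as a function ℕⁿ → ℕ: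
value 1 at j iff j_n < ξ(j₁,…,j_{n−1}) (0-indexed), and 0 otherwise. -/
def binFun (n : ℕ) (hn : 1 ≤ n) (ξ : NPartition (n - 1)) : (Fin n → ℕ) → ℕ :=
  fun j => if j ⟨n - 1, by omega⟩ < ξ.toFun (fun a => j (Fin.castLE (Nat.sub_le n 1) a))
    then 1 else 0

/-- The splitting equivalence. -/
def splitE (m : ℕ) : (Fin (m + 1) → ℕ) ≃ (Fin m → ℕ) × ℕ where
  toFun j := (fun a => j a.castSucc, j (Fin.last m))
  invFun p := Fin.snoc p.1 p.2
  left_inv j := Fin.snoc_init_self j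
  right_inv p := by
    ext a
    · simp
    · simp

theorem binFun_eq {m : ℕ} (hn : 1 ≤ m + 1) (ξ : NPartition m) (j : Fin (m + 1) → ℕ) :
    binFun (m + 1) hn ξ j =
      if j (Fin.last m) < ξ.toFun (fun a => j a.castSucc) then 1 else 0 := rfl

theorem binFun_antitone {m : ℕ} (hn : 1 ≤ m + 1) (ξ : NPartition m) ⦃i j : Fin (m + 1) → ℕ⦄
    (h : ∀ a, i a ≤ j a) : binFun (m + 1) hn ξ j ≤ binFun (m + 1) hn ξ i := by
  rw [binFun_eq, binFun_eq]
  split_ifs with h1 h2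
  · rfl
  · exfalso
    apply h2
    calc i (Fin.last m) ≤ j (Fin.last m) := h _
    _ < ξ.toFun (fun a => j a.castSucc) := h1
    _ ≤ ξ.toFun (fun a => i a.castSucc) := ξ.antitone (fun a => h _)
  · exact Nat.zero_le _
  · rfl

theorem binFun_support_subset {m : ℕ} (hn : 1 ≤ m + 1) (ξ : NPartition m) :
    support (binFun (m + 1) hn ξ) ⊆
      (splitE m) ⁻¹' (support ξ.toFun ×ˢ Set.Iio ξ.size) := by
  intro j hj
  rw [mem_support, binFun_eq] at hj
  have hlt : j (Fin.last m) < ξ.toFun (fun a => j a.castSucc) := by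
    by_contra hc; simp [hc] at hj
  constructor
  · simp only [mem_support, splitE, Equiv.coe_fn_mk]
    show ξ.toFun (fun a => j a.castSucc) ≠ 0; omega
  · simp only [splitE, Equiv.coe_fn_mk, Set.mem_Iio]
    exact lt_of_lt_of_le hlt (ξ.le_size _)

theorem binFun_support_finite {m : ℕ} (hn : 1 ≤ m + 1) (ξ : NPartition m) :
    (support (binFun (m + 1) hn ξ)).Finite :=
  Set.Finite.subset (Set.Finite.preimage (Equiv.injective _).injOn
    ((ξ.finite.prod (Set.finite_Iio _)))) (binFun_support_subset hn ξ)

theorem finsum_ite_lt (c : ℕ) : (∑ᶠ y : ℕ, if y < c then 1 else 0) = c := by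
  rw [finsum_eq_sum_of_support_subset _ (s := Finset.range c)]
  · rw [Finset.sum_congr rfl (fun y hy => by
      rw [if_pos (Finset.mem_range.mp hy)])]
    simp
  · intro y hy
    rw [mem_support] at hy
    have : y < c := by by_contra hc; simp [hc] at hy
    simpa using this

theorem binFun_size {m : ℕ} (hn : 1 ≤ m + 1) (ξ : NPartition m) :
    (∑ᶠ j, binFun (m + 1) hn ξ j) = ξ.size := by
  have key : ∀ j, binFun (m + 1) hn ξ j =
      (fun p : (Fin m → ℕ) × ℕ => if p.2 < ξ.toFun p.1 then 1 else 0) (splitE m j) :=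
    fun j => binFun_eq hn ξ j
  calc (∑ᶠ j, binFun (m + 1) hn ξ j)
      = ∑ᶠ p : (Fin m → ℕ) × ℕ, if p.2 < ξ.toFun p.1 then 1 else 0 := by
        rw [← finsum_comp_equiv (splitE m)]
        exact finsum_congr key
    _ = ∑ᶠ x, ∑ᶠ y, if y < ξ.toFun x then 1 else 0 := by
        apply finsum_curry
        apply Set.Finite.subset ((ξ.finite.prod (Set.finite_Iio ξ.size)))
        intro p hp
        rw [mem_support] at hp
        have h1 : p.2 < ξ.toFun p.1 := by by_contra hc; simp [hc] at hp
        exact ⟨by simp only [mem_support]; omega, lt_of_lt_of_le h1 (ξ.le_size _)⟩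
    _ = ∑ᶠ x, ξ.toFun x := finsum_congr fun x => finsum_ite_lt _
    _ = ξ.size := rfl

/-- The set 𝒞_π of finitely supported ℕ-valued functions m on the nonempty
(n−1)-partitions such that π = Σ_ξ m_ξ · (binary representation of ξ). -/
def Cset (n : ℕ) (hn : 1 ≤ n) (π : NPartition n) :
    Set ({ξ : NPartition (n - 1) // ξ.toFun ≠ 0} → ℕ) :=
  {m | (Function.support m).Finite ∧
    ∀ j : Fin n → ℕ, π.toFun j = ∑ᶠ ξ, m ξ * binFun n hn ξ.1 j}

/-- The combinatorial weight ω^c_π = Σ_{m ∈ 𝒞_π} Π_ξ 1/(m_ξ)!. -/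
noncomputable def omegaC (n : ℕ) (hn : 1 ≤ n) (π : NPartition n) : ℚ :=
  ∑ᶠ m ∈ Cset n hn π, ∏ᶠ ξ, (1 / (Nat.factorial (m ξ)) : ℚ)

/-- The generating series M_n(q) = Σ_i P_n(i)·qⁱ of n-partitions. -/
noncomputable def Mser (n : ℕ) : PowerSeries ℚ :=
  PowerSeries.mk fun i => (Nat.card {π : NPartition n // π.size = i} : ℚ)

abbrev SNe (m : ℕ) := {ξ : NPartition m // ξ.toFun ≠ 0}

theorem SNe.one_le_size {m : ℕ} (ξ : SNe m) : 1 ≤ ξ.1.size := by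
  rcases Nat.eq_zero_or_pos ξ.1.size with h | h
  · exact absurd ((ξ.1.size_eq_zero_iff).mp h) ξ.2
  · exact h

section SumPart

variable {m : ℕ}

noncomputable def sumFun (hn : 1 ≤ m + 1) (mm : SNe m → ℕ) : (Fin (m + 1) → ℕ) → ℕ :=
  fun j => ∑ᶠ ξ : SNe m, mm ξ * binFun (m + 1) hn ξ.1 j

theorem sumFun_eq_sum (hn : 1 ≤ m + 1) {mm : SNe m → ℕ} (hm : (support mm).Finite)
    (j : Fin (m + 1) → ℕ) :
    sumFun hn mm j = ∑ ξ ∈ hm.toFinset, mm ξ * binFun (m + 1) hn ξ.1 j := by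
  apply finsum_eq_sum_of_support_subset
  intro ξ hξ
  rw [mem_support] at hξ
  have : mm ξ ≠ 0 := fun h => hξ (by simp [h])
  simpa using this

noncomputable def sumPart (hn : 1 ≤ m + 1) (mm : SNe m → ℕ) (hm : (support mm).Finite) :
    NPartition (m + 1) where
  toFun := sumFun hn mm
  antitone i j h := by
    rw [sumFun_eq_sum hn hm, sumFun_eq_sum hn hm]
    exact Finset.sum_le_sum fun ξ _ =>
      Nat.mul_le_mul_left _ (binFun_antitone hn ξ.1 h)
  finite := by
    apply Set.Finite.subset
      (Set.Finite.biUnion hm (fun ξ _ => binFun_support_finite hn ξ.1))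
    intro j hj
    rw [mem_support] at hj
    simp only [Set.mem_iUnion, exists_prop]
    by_contra hc
    push_neg at hc
    apply hj
    rw [sumFun_eq_sum hn hm]
    apply Finset.sum_eq_zero
    intro ξ hξ
    rw [Set.Finite.mem_toFinset] at hξ
    have := hc ξ hξ
    rw [mem_support, not_not] at this
    simp [this]

theorem mem_Cset_iff (hn : 1 ≤ m + 1) (π : NPartition (m + 1)) (mm : SNe m → ℕ) :
    mm ∈ Cset (m + 1) hn π ↔
      ∃ hm : (support mm).Finite, π = sumPart hn mm hm := by
  constructor
  · rintro ⟨hm, hfun⟩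
    exact ⟨hm, NPartition.ext' (funext hfun)⟩
  · rintro ⟨hm, rfl⟩
    exact ⟨hm, fun j => rfl⟩

noncomputable def Wt (mm : SNe m → ℕ) : ℕ := ∑ᶠ ξ, mm ξ * ξ.1.size

theorem Wt_eq_sum {mm : SNe m → ℕ} (hm : (support mm).Finite) :
    Wt mm = ∑ ξ ∈ hm.toFinset, mm ξ * ξ.1.size := by
  apply finsum_eq_sum_of_support_subset
  intro ξ hξ
  rw [mem_support] at hξ
  have : mm ξ ≠ 0 := fun h => hξ (by simp [h])
  simpa using this

theorem sumPart_size (hn : 1 ≤ m + 1) (mm : SNe m → ℕ) (hm : (support mm).Finite) :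
    (sumPart hn mm hm).size = Wt mm := by
  have h1 : (sumPart hn mm hm).size
      = ∑ᶠ j, ∑ ξ ∈ hm.toFinset, mm ξ * binFun (m + 1) hn ξ.1 j :=
    finsum_congr fun j => sumFun_eq_sum hn hm j
  rw [h1, finsum_sum_comm _ _ (fun ξ _ => Set.Finite.subset (binFun_support_finite hn ξ.1)
    (fun j hj => by rw [mem_support] at hj ⊢; exact fun h => hj (by simp [h])))]
  rw [Wt_eq_sum hm]
  apply Finset.sum_congr rfl
  intro ξ _
  rw [← mul_finsum _ _, binFun_size hn ξ.1]

def Fb (m b : ℕ) : Set (SNe m → ℕ) := {mm | (support mm).Finite ∧ Wt mm = b}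

theorem Fb.le_of_mem {b : ℕ} {mm : SNe m → ℕ} (h : mm ∈ Fb m b) (ξ : SNe m) :
    mm ξ * ξ.1.size ≤ b := by
  obtain ⟨hm, hw⟩ := h
  rw [← hw, Wt_eq_sum hm]
  by_cases hξ : mm ξ = 0
  · simp [hξ]
  · exact Finset.single_le_sum (f := fun ξ => mm ξ * ξ.1.size)
      (fun i _ => Nat.zero_le _) (by simp [hξ])

theorem finite_setOf_size_eq_SNe (m i : ℕ) : {ξ : SNe m | ξ.1.size = i}.Finite := by
  rw [← Set.finite_coe_iff]
  apply Finite.of_injective (f := fun x : {ξ : SNe m | ξ.1.size = i} =>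
    (⟨x.1.1, x.2⟩ : {π : NPartition m // π.size = i}))
  rintro ⟨⟨x, hx⟩, hx2⟩ ⟨⟨y, hy⟩, hy2⟩ h
  simpa using h

theorem finite_size_le_SNe (m b : ℕ) : {ξ : SNe m | ξ.1.size ≤ b}.Finite := by
  have h : {ξ : SNe m | ξ.1.size ≤ b} = ⋃ i ∈ Set.Iic b, {ξ : SNe m | ξ.1.size = i} := by
    ext ξ; simp [Set.mem_Iic]
  rw [h]
  exact Set.Finite.biUnion (Set.finite_Iic b) fun i _ => finite_setOf_size_eq_SNe m i

theorem Fb_finite (m b : ℕ) : (Fb m b).Finite := by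
  rw [← Set.finite_coe_iff]
  have hT := finite_size_le_SNe m b
  haveI : Finite ({ξ : SNe m | ξ.1.size ≤ b}) := hT
  apply Finite.of_injective (f := fun mm : Fb m b =>
    (fun ξ : {ξ : SNe m | ξ.1.size ≤ b} => (⟨mm.1 ξ.1, by
      have h1 := Fb.le_of_mem mm.2 ξ.1
      have h2 := SNe.one_le_size ξ.1
      have h3 : mm.1 ξ.1 ≤ b := le_trans (Nat.le_mul_of_pos_right _ h2) h1
      omega⟩ : Fin (b + 1))))
  rintro ⟨mm, hmm⟩ ⟨mm', hmm'⟩ h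
  ext1
  funext ξ
  show mm ξ = mm' ξ
  by_cases hξ : ξ.1.size ≤ b
  · have := congrFun h ⟨ξ, hξ⟩
    simpa [Fin.ext_iff] using this
  · have h1 : mm ξ = 0 := by
      by_contra hne
      have := Fb.le_of_mem hmm ξ
      have h2 := SNe.one_le_size ξ
      nlinarith [Nat.one_le_iff_ne_zero.mpr hne]
    have h2 : mm' ξ = 0 := by
      by_contra hne
      have := Fb.le_of_mem hmm' ξ
      have h2 := SNe.one_le_size ξ
      nlinarith [Nat.one_le_iff_ne_zero.mpr hne]
    rw [h1, h2]

end SumPart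

noncomputable def wQ {m : ℕ} (mm : SNe m → ℕ) : ℚ :=
  ∏ᶠ ξ, (1 / (Nat.factorial (mm ξ)) : ℚ)

theorem omegaC_eq {m : ℕ} (hn : 1 ≤ m + 1) (π : NPartition (m + 1)) :
    omegaC (m + 1) hn π = ∑ᶠ mm ∈ Cset (m + 1) hn π, wQ mm := rfl

theorem finite_setOf_size_eq (k b : ℕ) : {π : NPartition k | π.size = b}.Finite := by
  rw [← Set.finite_coe_iff]
  exact Finite.of_equiv {π : NPartition k // π.size = b}
    (Equiv.subtypeEquivRight fun π => Iff.rfl)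

theorem Cset_subset_Fb {m : ℕ} (hn : 1 ≤ m + 1) (π : NPartition (m + 1)) :
    Cset (m + 1) hn π ⊆ Fb m π.size := by
  intro mm hmm
  obtain ⟨hm, rfl⟩ := (mem_Cset_iff hn π mm).mp hmm
  exact ⟨hm, (sumPart_size hn mm hm).symm⟩

theorem Fb_eq_biUnion {m b : ℕ} (hn : 1 ≤ m + 1) :
    Fb m b = ⋃ π ∈ {π : NPartition (m + 1) | π.size = b}, Cset (m + 1) hn π := by
  ext mm
  constructor
  · rintro ⟨hm, hw⟩
    have h1 : (sumPart hn mm hm).size = b := by rw [sumPart_size hn mm hm, hw]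
    exact Set.mem_biUnion h1 ((mem_Cset_iff hn _ mm).mpr ⟨hm, rfl⟩)
  · intro h
    obtain ⟨π, hπ, hmm⟩ := Set.mem_iUnion₂.mp h
    have := Cset_subset_Fb hn π hmm
    rwa [Set.mem_setOf_eq.mp hπ] at this

theorem lhs_coeff (m b : ℕ) (hn : 1 ≤ m + 1) :
    (∑ᶠ π ∈ {π : NPartition (m + 1) | π.size = b}, omegaC (m + 1) hn π) =
      ∑ᶠ mm ∈ Fb m b, wQ mm := by
  rw [Fb_eq_biUnion hn]
  rw [finsum_mem_biUnion]
  · exact finsum_mem_congr rfl fun π _ => (omegaC_eq hn π).symm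
  · intro π hπ π' hπ' hne
    rw [Function.onFun, Set.disjoint_left]
    intro mm hmm hmm'
    apply hne
    obtain ⟨hm, rfl⟩ := (mem_Cset_iff hn π mm).mp hmm
    obtain ⟨hm', h'⟩ := (mem_Cset_iff hn π' mm).mp hmm'
    rw [h']
  · exact finite_setOf_size_eq (m + 1) b
  · intro π hπ
    apply Set.Finite.subset (Fb_finite m b)
    have := Cset_subset_Fb hn π
    rwa [Set.mem_setOf_eq.mp hπ] at this

section Count

variable {α : Type*} [DecidableEq α]

def cnt {a : ℕ} (f : Fin a → α) (s : α) : ℕ := ∑ i, if f i = s then 1 else 0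

theorem one_le_cnt {a : ℕ} (f : Fin a → α) (i : Fin a) : 1 ≤ cnt f (f i) := by
  have : (1 : ℕ) = if f i = f i then 1 else 0 := by simp
  rw [this]
  exact Finset.single_le_sum (f := fun j => if f j = f i then 1 else 0)
    (fun j _ => by positivity) (Finset.mem_univ i)

theorem cnt_support_subset {a : ℕ} (f : Fin a → α) :
    support (cnt f) ⊆ Set.range f := by
  intro s hs
  rw [mem_support] at hs
  by_contra hc
  apply hs
  apply Finset.sum_eq_zero
  intro i _
  rw [if_neg]
  exact fun h => hc ⟨i, h⟩

theorem cnt_support_finite {a : ℕ} (f : Fin a → α) : (support (cnt f)).Finite :=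
  (Set.finite_range f).subset (cnt_support_subset f)

theorem finsum_cnt_mul {a : ℕ} (f : Fin a → α) (g : α → ℕ) :
    (∑ᶠ s, cnt f s * g s) = ∑ i, g (f i) := by
  have h1 : ∀ s, cnt f s * g s = ∑ i, if f i = s then g s else 0 := by
    intro s
    rw [cnt, Finset.sum_mul]
    exact Finset.sum_congr rfl fun i _ => by split_ifs <;> simp
  rw [finsum_congr h1, finsum_sum_comm]
  · apply Finset.sum_congr rfl
    intro i _
    rw [finsum_eq_single _ (f i) (fun s hs => if_neg (fun h => hs h.symm)), if_pos rfl]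
  · intro i _
    apply Set.Finite.subset (Set.finite_singleton (f i))
    intro s hs
    rw [mem_support] at hs
    by_contra hc
    exact hs (if_neg (fun h => hc (by rw [← h]; rfl)))

theorem finsum_cnt {a : ℕ} (f : Fin a → α) : (∑ᶠ s, cnt f s) = a := by
  have := finsum_cnt_mul f (fun _ => 1)
  simpa using this

theorem cnt_snoc {a : ℕ} (g : Fin a → α) (s t : α) :
    cnt (Fin.snoc g s) t = cnt g t + if s = t then 1 else 0 := by
  rw [cnt, Fin.sum_univ_castSucc]
  simp [cnt, Fin.snoc_castSucc, Fin.snoc_last]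

theorem finite_cnt_eq {a : ℕ} (mm : α → ℕ) (hm : (support mm).Finite) :
    Finite {f : Fin a → α // ∀ s, cnt f s = mm s} := by
  haveI := hm.to_subtype
  apply Finite.of_injective (f := fun F : {f : Fin a → α // ∀ s, cnt f s = mm s} =>
    (fun i => (⟨F.1 i, by
      rw [mem_support]
      have h1 := one_le_cnt F.1 i
      rw [F.2 (F.1 i)] at h1
      omega⟩ : ↥(support mm))))
  rintro ⟨f, hf⟩ ⟨f', hf'⟩ h
  ext i
  exact congrArg Subtype.val (congrFun h i)

theorem card_sigma_finsum {ι : Type*} [Finite ι] (X : ι → Type*) [∀ i, Finite (X i)] :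
    Nat.card (Σ i, X i) = ∑ᶠ i, Nat.card (X i) := by
  letI := Fintype.ofFinite ι
  letI : ∀ i, Fintype (X i) := fun i => Fintype.ofFinite _
  rw [finsum_eq_sum_of_fintype]
  simp [Nat.card_eq_fintype_card, Fintype.card_sigma]

noncomputable def snocEquiv (a : ℕ) (mm : α → ℕ) :
    {f : Fin (a + 1) → α // ∀ s, cnt f s = mm s} ≃
      Σ s : ↥(support mm),
        {g : Fin a → α // ∀ t, cnt g t = Function.update mm s.1 (mm s.1 - 1) t} where
  toFun F := ⟨⟨F.1 (Fin.last a), by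
      rw [mem_support]
      have h1 := one_le_cnt F.1 (Fin.last a)
      rw [F.2] at h1; omega⟩,
    ⟨Fin.init F.1, by
      intro t
      show cnt (Fin.init F.1) t
        = Function.update mm (F.1 (Fin.last a)) (mm (F.1 (Fin.last a)) - 1) t
      have hc : ∀ t, cnt F.1 t
          = cnt (Fin.init F.1) t + if F.1 (Fin.last a) = t then 1 else 0 := by
        intro t
        conv_lhs => rw [← Fin.snoc_init_self F.1]
        rw [cnt_snoc]
      rcases eq_or_ne (F.1 (Fin.last a)) t with rfl | hts
      · rw [Function.update_self]
        have h2 := hc (F.1 (Fin.last a))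
        rw [F.2, if_pos rfl] at h2
        omega
      · rw [Function.update_of_ne (Ne.symm hts)]
        have h2 := hc t
        rw [F.2, if_neg hts] at h2
        omega⟩⟩
  invFun P := ⟨Fin.snoc P.2.1 P.1.1, by
      intro t
      rw [cnt_snoc, P.2.2 t]
      rcases eq_or_ne (P.1.1 : α) t with rfl | hts
      · have hs : mm P.1.1 ≠ 0 := P.1.2
        rw [Function.update_self, if_pos rfl]
        omega
      · rw [Function.update_of_ne (Ne.symm hts), if_neg hts]
        omega⟩
  left_inv F := Subtype.ext (Fin.snoc_init_self F.1)
  right_inv P := by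
    rcases P with ⟨⟨s, hs⟩, ⟨g, hg⟩⟩
    have h1 : (Fin.snoc g s : Fin (a + 1) → α) (Fin.last a) = s := by simp
    refine Sigma.ext (Subtype.ext h1) ((Subtype.heq_iff_coe_eq ?_).mpr ?_)
    · intro g'
      show (∀ t, cnt g' t = Function.update mm ((Fin.snoc g s : Fin (a + 1) → α) (Fin.last a))
          (mm ((Fin.snoc g s : Fin (a + 1) → α) (Fin.last a)) - 1) t) ↔
        (∀ t, cnt g' t = Function.update mm s (mm s - 1) t)
      rw [h1]
    · funext i
      simp [Fin.init]

theorem multinomial_count :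
    ∀ (a : ℕ) (mm : α → ℕ), (support mm).Finite → (∑ᶠ s, mm s) = a →
    Nat.card {f : Fin a → α // ∀ s, cnt f s = mm s} * (∏ᶠ s, Nat.factorial (mm s)) =
      Nat.factorial a := by
  intro a
  induction a with
  | zero =>
    intro mm hm hsum
    have h0 : ∀ s, mm s = 0 := by
      intro s
      rw [finsum_eq_sum _ hm] at hsum
      by_cases hs : s ∈ hm.toFinset
      · exact (Finset.sum_eq_zero_iff.mp hsum) s hs
      · simpa using hs
    have h1 : Nat.card {f : Fin 0 → α // ∀ s, cnt f s = mm s} = 1 := by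
      haveI : Nonempty {f : Fin 0 → α // ∀ s, cnt f s = mm s} :=
        ⟨⟨fun i => i.elim0, fun s => by simp [cnt, h0]⟩⟩
      haveI : Subsingleton {f : Fin 0 → α // ∀ s, cnt f s = mm s} :=
        ⟨fun F G => Subtype.ext (funext fun i => i.elim0)⟩
      exact Nat.card_unique
    rw [h1, finprod_congr (fun s => by rw [h0 s]; rfl : ∀ s, Nat.factorial (mm s) = 1),
      finprod_one]
    rfl
  | succ a IH =>
    intro mm hm hsum
    classical
    have hTsum : ∑ s ∈ hm.toFinset, mm s = a + 1 := by
      rw [← finsum_eq_sum _ hm]; exact hsum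
    have hmm's : ∀ s, mm s ≠ 0 → (support (Function.update mm s (mm s - 1))).Finite := by
      intro s hs
      apply hm.subset
      intro t ht
      rw [mem_support] at ht ⊢
      rcases eq_or_ne t s with rfl | hts
      · exact hs
      · rwa [Function.update_of_ne hts] at ht
    have hsub : ∀ s, support (Function.update mm s (mm s - 1)) ⊆ ↑hm.toFinset := by
      intro s t ht
      rw [mem_support] at ht
      rw [Set.Finite.coe_toFinset, mem_support]
      rcases eq_or_ne t s with rfl | hts
      · intro h0; rw [Function.update_self, h0] at ht; simp at ht
      · rwa [Function.update_of_ne hts] at ht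
    have hsum' : ∀ s, mm s ≠ 0 → (∑ᶠ t, Function.update mm s (mm s - 1) t) = a := by
      intro s hs
      rw [finsum_eq_sum_of_support_subset _ (hsub s)]
      have hsT : s ∈ hm.toFinset := by rw [Set.Finite.mem_toFinset]; exact hs
      rw [Finset.sum_update_of_mem hsT]
      have h2 := Finset.add_sum_erase hm.toFinset mm hsT
      rw [Finset.erase_eq] at h2
      omega
    have hcard : Nat.card {f : Fin (a + 1) → α // ∀ s, cnt f s = mm s}
        = ∑ᶠ s ∈ support mm,
            Nat.card {g : Fin a → α // ∀ t, cnt g t = Function.update mm s (mm s - 1) t} := by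
      haveI := hm.to_subtype
      haveI : ∀ s : ↥(support mm),
          Finite {g : Fin a → α // ∀ t, cnt g t = Function.update mm s.1 (mm s.1 - 1) t} :=
        fun s => finite_cnt_eq _ (hmm's s.1 s.2)
      rw [Nat.card_congr (snocEquiv a mm), card_sigma_finsum]
      exact finsum_set_coe_eq_finsum_mem
        (f := fun s => Nat.card {g : Fin a → α // ∀ t, cnt g t
          = Function.update mm s (mm s - 1) t}) (support mm)
    rw [hcard, finsum_mem_eq_finite_toFinset_sum _ hm]
    have hprod : (∏ᶠ s, Nat.factorial (mm s)) = ∏ s ∈ hm.toFinset, Nat.factorial (mm s) := by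
      apply finprod_eq_prod_of_mulSupport_subset
      intro s hs
      rw [mem_mulSupport] at hs
      rw [Set.Finite.coe_toFinset, mem_support]
      intro h0; exact hs (by rw [h0]; rfl)
    rw [hprod, Finset.sum_mul]
    have hterm : ∀ s ∈ hm.toFinset,
        Nat.card {g : Fin a → α // ∀ t, cnt g t = Function.update mm s (mm s - 1) t} *
          (∏ t ∈ hm.toFinset, Nat.factorial (mm t)) = Nat.factorial a * mm s := by
      intro s hsT
      have hs : mm s ≠ 0 := by rwa [Set.Finite.mem_toFinset, mem_support] at hsT
      have hprod' : (∏ᶠ t, Nat.factorial (Function.update mm s (mm s - 1) t))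
          = ∏ t ∈ hm.toFinset, Nat.factorial (Function.update mm s (mm s - 1) t) := by
        apply finprod_eq_prod_of_mulSupport_subset
        intro t ht
        rw [mem_mulSupport] at ht
        rw [Set.Finite.coe_toFinset, mem_support]
        intro h0
        apply ht
        rcases eq_or_ne t s with rfl | hts
        · exact absurd h0 hs
        · rw [Function.update_of_ne hts, h0]; rfl
      have hIH := IH (Function.update mm s (mm s - 1)) (hmm's s hs) (hsum' s hs)
      rw [hprod'] at hIH
      have hfacs : Nat.factorial (mm s) = mm s * Nat.factorial (mm s - 1) := by
        obtain ⟨k, hk⟩ : ∃ k, mm s = k + 1 := ⟨mm s - 1, by omega⟩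
        rw [hk]
        simp [Nat.factorial_succ]
      have hsplit : (∏ t ∈ hm.toFinset, Nat.factorial (Function.update mm s (mm s - 1) t))
          = Nat.factorial (mm s - 1) * ∏ t ∈ hm.toFinset.erase s, Nat.factorial (mm t) := by
        rw [← Finset.mul_prod_erase hm.toFinset
          (fun t => Nat.factorial (Function.update mm s (mm s - 1) t)) hsT]
        congr 1
        · rw [Function.update_self]
        · exact Finset.prod_congr rfl fun t ht => by
            rw [Function.update_of_ne (Finset.ne_of_mem_erase ht)]
      have hfac : (∏ t ∈ hm.toFinset, Nat.factorial (mm t))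
          = (∏ t ∈ hm.toFinset, Nat.factorial (Function.update mm s (mm s - 1) t)) * mm s := by
        rw [hsplit, ← Finset.mul_prod_erase hm.toFinset
          (fun t => Nat.factorial (mm t)) hsT, hfacs]
        ring
      rw [hfac, ← mul_assoc, hIH]
    rw [Finset.sum_congr rfl hterm, ← Finset.mul_sum, hTsum, Nat.factorial_succ]
    ring

end Count

section RHS

theorem card_eq_sum_fibers {X I : Type*} (κ : X → I) (s : Finset I) (h : ∀ x, κ x ∈ s)
    [∀ i, Finite {x : X // κ x = i}] :
    Nat.card X = ∑ i ∈ s, Nat.card {x : X // κ x = i} := by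
  have e : X ≃ Σ i : {i : I // i ∈ s}, {x : X // κ x = i.1} :=
    { toFun := fun x => ⟨⟨κ x, h x⟩, ⟨x, rfl⟩⟩
      invFun := fun p => p.2.1
      left_inv := fun x => rfl
      right_inv := fun p => by
        rcases p with ⟨⟨i, hi⟩, ⟨x, hx⟩⟩
        refine Sigma.ext (Subtype.ext hx) ((Subtype.heq_iff_coe_eq ?_).mpr rfl)
        intro x'
        show κ x' = κ x ↔ κ x' = i
        rw [hx] }
  rw [Nat.card_congr e, card_sigma_finsum, finsum_eq_sum_of_fintype]
  exact Finset.sum_coe_sort s (fun i => Nat.card {x : X // κ x = i})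

def NPartition.zero (k : ℕ) : NPartition k :=
  ⟨fun _ => 0, fun _ _ _ => le_rfl, by simp⟩

theorem NPartition.card_size_zero (k : ℕ) :
    Nat.card {π : NPartition k // π.size = 0} = 1 := by
  haveI : Nonempty {π : NPartition k // π.size = 0} :=
    ⟨⟨NPartition.zero k, by simp [NPartition.size, NPartition.zero]⟩⟩
  haveI : Subsingleton {π : NPartition k // π.size = 0} := ⟨by
    rintro ⟨π, hπ⟩ ⟨π', hπ'⟩
    apply Subtype.ext
    apply NPartition.ext'
    rw [(π.size_eq_zero_iff).mp hπ, (π'.size_eq_zero_iff).mp hπ']⟩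
  exact Nat.card_unique

theorem coeff_Mser_sub_one (m i : ℕ) :
    (PowerSeries.coeff i) (Mser m - 1)
      = (Nat.card {ξ : SNe m // ξ.1.size = i} : ℚ) := by
  rw [map_sub, PowerSeries.coeff_one, Mser, PowerSeries.coeff_mk]
  rcases eq_or_ne i 0 with rfl | hi
  · rw [if_pos rfl, NPartition.card_size_zero]
    haveI : IsEmpty {ξ : SNe m // ξ.1.size = 0} :=
      ⟨fun ξ => ξ.1.2 ((ξ.1.1.size_eq_zero_iff).mp ξ.2)⟩
    rw [Nat.card_of_isEmpty]
    simp
  · rw [if_neg hi]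
    have hcongr : Nat.card {π : NPartition m // π.size = i}
        = Nat.card {ξ : SNe m // ξ.1.size = i} := by
      apply Nat.card_congr
      exact
        { toFun := fun π => ⟨⟨π.1, fun h0 => hi (by
            rw [← π.2, (π.1.size_eq_zero_iff).mpr h0])⟩, π.2⟩
          invFun := fun ξ => ⟨ξ.1.1, ξ.2⟩
          left_inv := fun π => rfl
          right_inv := fun ξ => rfl }
    rw [hcongr]
    simp

theorem finite_weight_eq (m a b : ℕ) :
    Finite {f : Fin a → SNe m // (∑ i, (f i).1.size) = b} := by
  haveI := (finite_size_le_SNe m b).to_subtype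
  apply Finite.of_injective (f := fun F : {f : Fin a → SNe m // (∑ i, (f i).1.size) = b} =>
    (fun i => (⟨F.1 i, by
      have : (F.1 i).1.size ≤ ∑ j, (F.1 j).1.size :=
        Finset.single_le_sum (f := fun j => (F.1 j).1.size)
          (fun j _ => Nat.zero_le _) (Finset.mem_univ i)
      rw [F.2] at this
      exact this⟩ : {ξ : SNe m | ξ.1.size ≤ b})))
  rintro ⟨f, hf⟩ ⟨f', hf'⟩ h
  apply Subtype.ext
  funext i
  exact congrArg Subtype.val (congrFun h i)

noncomputable def sizeVec {m a : ℕ} (f : Fin a → SNe m) : ℕ →₀ ℕ :=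
  Finsupp.onFinset (Finset.range a)
    (fun i => if h : i < a then (f ⟨i, h⟩).1.size else 0)
    (fun i hi => by
      rw [Finset.mem_range]
      by_contra hc
      simp [hc] at hi)

theorem sizeVec_apply {m a : ℕ} (f : Fin a → SNe m) (i : Fin a) :
    sizeVec f i.val = (f i).1.size := by
  show (if h : i.val < a then (f ⟨i.val, h⟩).1.size else 0) = (f i).1.size
  rw [dif_pos i.isLt]

theorem sizeVec_sum {m a : ℕ} (f : Fin a → SNe m) :
    (∑ i ∈ Finset.range a, sizeVec f i) = ∑ i, (f i).1.size := by
  rw [← Fin.sum_univ_eq_sum_range (fun i => sizeVec f i) a]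
  exact Finset.sum_congr rfl fun i _ => sizeVec_apply f i

theorem coeff_pow_eq (m a b : ℕ) :
    (PowerSeries.coeff b) ((Mser m - 1) ^ a)
      = (Nat.card {f : Fin a → SNe m // (∑ i, (f i).1.size) = b} : ℚ) := by
  classical
  rw [PowerSeries.coeff_pow]
  have h1 : ∀ l ∈ Finset.finsuppAntidiag (Finset.range a) b,
      (∏ i ∈ Finset.range a, (PowerSeries.coeff (l i)) (Mser m - 1))
        = (Nat.card {f : Fin a → SNe m // ∀ i : Fin a, (f i).1.size = l i.val} : ℚ) := by
    intro l _
    rw [Finset.prod_congr rfl (fun i _ => coeff_Mser_sub_one m (l i))]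
    rw [← Nat.cast_prod]
    congr 1
    rw [← Fin.prod_univ_eq_prod_range (fun i => Nat.card {ξ : SNe m // ξ.1.size = l i}) a]
    rw [← Nat.card_pi]
    exact (Nat.card_congr
      (Equiv.subtypePiEquivPi (p := fun (i : Fin a) (x : SNe m) => x.1.size = l i.val))).symm
  rw [Finset.sum_congr rfl h1, ← Nat.cast_sum]
  congr 1
  haveI : Finite {f : Fin a → SNe m // (∑ i, (f i).1.size) = b} := finite_weight_eq m a b
  rw [card_eq_sum_fibers (κ := fun F : {f : Fin a → SNe m // (∑ i, (f i).1.size) = b} =>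
    sizeVec F.1) (s := Finset.finsuppAntidiag (Finset.range a) b)
    (fun F => by
      rw [Finset.mem_finsuppAntidiag]
      refine ⟨?_, Finsupp.support_onFinset_subset⟩
      rw [Finset.sum_congr rfl (fun i _ => rfl), sizeVec_sum F.1, F.2])]
  apply Finset.sum_congr rfl
  intro l hl
  rw [Finset.mem_finsuppAntidiag] at hl
  refine (Nat.card_congr ?_).symm
  exact
    { toFun := fun x => ⟨x.1.1, fun i => by
        have h2 := congrArg (fun g : ℕ →₀ ℕ => g i.val) x.2
        rw [← h2, sizeVec_apply]⟩
      invFun := fun f => ⟨⟨f.1, by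
        have h3 : (∑ i ∈ Finset.range a, (l : ℕ → ℕ) i) = b := hl.1
        rw [← h3, ← Fin.sum_univ_eq_sum_range (fun i => (l : ℕ → ℕ) i) a]
        exact Finset.sum_congr rfl fun i _ => f.2 i⟩, by
        apply Finsupp.ext
        intro i
        by_cases hia : i < a
        · have := f.2 ⟨i, hia⟩
          rw [show (sizeVec f.1) i = ((sizeVec f.1) (⟨i, hia⟩ : Fin a).val) from rfl,
            sizeVec_apply, this]
        · have h4 : (sizeVec f.1) i = 0 := by
            show (if h : i < a then _ else 0) = 0
            rw [dif_neg hia]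
          rw [h4, eq_comm, ← Finsupp.notMem_support_iff]
          intro hmem
          exact hia (Finset.mem_range.mp (hl.2 hmem))⟩
      left_inv := fun x => Subtype.ext (Subtype.ext rfl)
      right_inv := fun f => Subtype.ext rfl }

end RHS

open scoped Classical

section Assemble

def FbA (m a b : ℕ) : Set (SNe m → ℕ) := {mm | mm ∈ Fb m b ∧ (∑ᶠ s, mm s) = a}

theorem FbA_finite (m a b : ℕ) : (FbA m a b).Finite :=
  (Fb_finite m b).subset fun _ hmm => hmm.1

theorem Fb.finsum_le {m b : ℕ} {mm : SNe m → ℕ} (h : mm ∈ Fb m b) : (∑ᶠ s, mm s) ≤ b := by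
  obtain ⟨hm, hw⟩ := h
  rw [finsum_eq_sum _ hm, ← hw, Wt_eq_sum hm]
  exact Finset.sum_le_sum fun ξ _ => Nat.le_mul_of_pos_right _ (SNe.one_le_size ξ)

theorem Tcard_eq (m a b : ℕ) :
    Nat.card {f : Fin a → SNe m // (∑ i, (f i).1.size) = b}
      = ∑ mm ∈ (FbA_finite m a b).toFinset,
          Nat.card {f : Fin a → SNe m // ∀ s, cnt f s = mm s} := by
  haveI : Finite {f : Fin a → SNe m // (∑ i, (f i).1.size) = b} := finite_weight_eq m a b
  rw [card_eq_sum_fibers (κ := fun F : {f : Fin a → SNe m // (∑ i, (f i).1.size) = b} =>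
    cnt F.1) (s := (FbA_finite m a b).toFinset)
    (fun F => by
      rw [Set.Finite.mem_toFinset]
      refine ⟨⟨cnt_support_finite F.1, ?_⟩, finsum_cnt F.1⟩
      show Wt (cnt F.1) = b
      rw [Wt, finsum_cnt_mul F.1 (fun ξ => ξ.1.size), F.2])]
  apply Finset.sum_congr rfl
  intro mm hmm
  rw [Set.Finite.mem_toFinset] at hmm
  apply Nat.card_congr
  exact
    { toFun := fun x => ⟨x.1.1, fun s => congrFun x.2 s⟩
      invFun := fun f => ⟨⟨f.1, by
        rw [← finsum_cnt_mul f.1 (fun ξ => ξ.1.size)]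
        have hcg : ∀ s, cnt f.1 s * s.1.size = mm s * s.1.size := fun s => by rw [f.2 s]
        rw [finsum_congr hcg]
        exact hmm.1.2⟩, funext f.2⟩
      left_inv := fun x => Subtype.ext (Subtype.ext rfl)
      right_inv := fun f => Subtype.ext rfl }

theorem term_eq (m a b : ℕ) (mm : SNe m → ℕ) (hmm : mm ∈ FbA m a b) :
    (1 / (Nat.factorial a) : ℚ) * (Nat.card {f : Fin a → SNe m // ∀ s, cnt f s = mm s} : ℚ)
      = wQ mm := by
  obtain ⟨⟨hm, hw⟩, hsum⟩ := hmm
  have hmc := multinomial_count a mm hm hsum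
  have hfin : (∏ᶠ s, Nat.factorial (mm s)) = ∏ s ∈ hm.toFinset, Nat.factorial (mm s) := by
    apply finprod_eq_prod_of_mulSupport_subset
    intro s hs
    rw [Function.mem_mulSupport] at hs
    rw [Set.Finite.coe_toFinset, Function.mem_support]
    intro h0; exact hs (by rw [h0]; rfl)
  rw [hfin] at hmc
  have hwq : wQ mm = ∏ s ∈ hm.toFinset, (1 / (Nat.factorial (mm s)) : ℚ) := by
    apply finprod_eq_prod_of_mulSupport_subset
    intro s hs
    rw [Function.mem_mulSupport] at hs
    rw [Set.Finite.coe_toFinset, Function.mem_support]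
    intro h0
    apply hs
    rw [h0]
    norm_num
  have hcast : (Nat.card {f : Fin a → SNe m // ∀ s, cnt f s = mm s} : ℚ)
      * ∏ s ∈ hm.toFinset, (Nat.factorial (mm s) : ℚ) = (Nat.factorial a : ℚ) := by
    rw [← Nat.cast_prod, ← Nat.cast_mul, hmc]
  have hne : (∏ s ∈ hm.toFinset, (Nat.factorial (mm s) : ℚ)) ≠ 0 :=
    Finset.prod_ne_zero_iff.mpr fun s _ => Nat.cast_ne_zero.mpr (Nat.factorial_ne_zero _)
  have hane : (Nat.factorial a : ℚ) ≠ 0 := Nat.cast_ne_zero.mpr (Nat.factorial_ne_zero _)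
  rw [hwq]
  have hprod : (∏ s ∈ hm.toFinset, (1 / (Nat.factorial (mm s)) : ℚ))
      = 1 / ∏ s ∈ hm.toFinset, (Nat.factorial (mm s) : ℚ) := by
    simp only [one_div]
    exact Finset.prod_inv_distrib (f := fun s => (Nat.factorial (mm s) : ℚ))
  rw [hprod, div_mul_eq_mul_div, one_mul, div_eq_div_iff hane hne, one_mul]
  exact hcast

theorem rhs_coeff (m b : ℕ) :
    (∑ᶠ a : ℕ, (1 / (Nat.factorial a) : ℚ) * PowerSeries.coeff b ((Mser m - 1) ^ a))
      = ∑ᶠ mm ∈ Fb m b, wQ mm := by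
  have hga : ∀ a, (1 / (Nat.factorial a) : ℚ) * PowerSeries.coeff b ((Mser m - 1) ^ a)
      = ∑ᶠ mm ∈ FbA m a b, wQ mm := by
    intro a
    rw [coeff_pow_eq, Tcard_eq, finsum_mem_eq_finite_toFinset_sum _ (FbA_finite m a b)]
    rw [Nat.cast_sum, Finset.mul_sum]
    apply Finset.sum_congr rfl
    intro mm hmm
    rw [Set.Finite.mem_toFinset] at hmm
    exact term_eq m a b mm hmm
  rw [finsum_congr hga]
  have hunion : Fb m b = ⋃ a ∈ Set.Iic b, FbA m a b := by
    ext mm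
    constructor
    · intro h
      exact Set.mem_biUnion (Fb.finsum_le h) ⟨h, rfl⟩
    · intro h
      obtain ⟨a, _, hmm⟩ := Set.mem_iUnion₂.mp h
      exact hmm.1
  rw [hunion, finsum_mem_biUnion]
  · rw [← Finset.coe_Iic, finsum_mem_coe_finset]
    apply finsum_eq_sum_of_support_subset
    intro a ha
    rw [Function.mem_support] at ha
    rw [Finset.coe_Iic, Set.mem_Iic]
    by_contra hc
    push_neg at hc
    apply ha
    have hempty : FbA m a b = ∅ := by
      ext mm
      simp only [Set.mem_empty_iff_false, iff_false]
      intro hmm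
      have h1 := Fb.finsum_le hmm.1
      have h2 := hmm.2
      omega
    rw [hempty, finsum_mem_empty]
  · intro a _ a' _ hne
    rw [Function.onFun, Set.disjoint_left]
    intro mm h1 h2
    apply hne
    rw [← h1.2, ← h2.2]
  · exact Set.finite_Iic b
  · intro a _
    exact FbA_finite m a b

end Assemble

theorem stmt_15 (n : ℕ) (hn : 1 ≤ n) :
    (PowerSeries.mk fun b => ∑ᶠ π ∈ {π : NPartition n | π.size = b}, omegaC n hn π) =
      (PowerSeries.mk fun b => ∑ᶠ a : ℕ,
        (1 / (Nat.factorial a) : ℚ) * PowerSeries.coeff b ((Mser (n - 1) - 1) ^ a)) := by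
  obtain ⟨m, rfl⟩ : ∃ m, n = m + 1 := ⟨n - 1, by omega⟩
  ext b
  simp only [PowerSeries.coeff_mk, Nat.add_sub_cancel]
  rw [lhs_coeff m b hn, rhs_coeff m b]
end
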